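/- Let T ∈ {0,1}^{m×n} be a binary matrix and let R ∈ {0,1}^{n×n} be a binary matrix with R ≥ I_n. Then there exist an invertible matrix X ∈ Sparse(R) and a matrix Y ∈ Sparse(T) such that Struct(YX⁻¹) = TR^{n−1}, where TR^{n−1} is the structural product of T with the (n−1)-fold structural power of R. In particular, if TR^{n−1} ≰ S for a binary matrix S ∈ {0,1}^{m×n}, then there exist Y ∈ Sparse(T) and invertible X ∈ Sparse(R) with YX⁻¹ ∉ Sparse(S). -/

import Mathlib

open Matrix

/-- Structural product of binary (Boolean) matrices:
`(sprod X Z) i j = true` iff `∃ k, X i k = true ∧ Z k j = true`. -/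
def sprod {m n p : ℕ} (X : Matrix (Fin m) (Fin n) Bool) (Z : Matrix (Fin n) (Fin p) Bool) :
    Matrix (Fin m) (Fin p) Bool :=
  Matrix.of fun i j => decide (∃ k, X i k = true ∧ Z k j = true)

/-- Structural power of a binary matrix, with `spow R 0 = I`. -/
def spow {n : ℕ} (R : Matrix (Fin n) (Fin n) Bool) : ℕ → Matrix (Fin n) (Fin n) Bool
  | 0 => Matrix.of fun i j => decide (i = j)
  | k + 1 => sprod (spow R k) R

/-- `Y` belongs to the sparsity subspace `Sparse(X)`. -/
def InSparse {m n : ℕ} (X : Matrix (Fin m) (Fin n) Bool) (Y : Matrix (Fin m) (Fin n) ℝ) : Prop :=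
  ∀ i j, X i j = false → Y i j = 0

/-- The binary matrix encoding the sparsity pattern of a real matrix. -/
noncomputable def Struct {m n : ℕ} (Y : Matrix (Fin m) (Fin n) ℝ) : Matrix (Fin m) (Fin n) Bool :=
  Matrix.of fun i j => decide (Y i j ≠ 0)

/-- Entrywise order on binary matrices: `leB X X'` means `X ≤ X'`. -/
def leB {m n : ℕ} (X X' : Matrix (Fin m) (Fin n) Bool) : Prop :=
  ∀ i j, X i j = true → X' i j = true

lemma sprod_apply_iff {m n p : ℕ} (X : Matrix (Fin m) (Fin n) Bool)
    (Z : Matrix (Fin n) (Fin p) Bool) (i : Fin m) (j : Fin p) :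
    sprod X Z i j = true ↔ ∃ k, X i k = true ∧ Z k j = true := by
  simp [sprod]

lemma spow_succ_apply_iff {n : ℕ} (R : Matrix (Fin n) (Fin n) Bool) (t : ℕ) (k j : Fin n) :
    spow R (t + 1) k j = true ↔ ∃ l, spow R t k l = true ∧ R l j = true := by
  show sprod (spow R t) R k j = true ↔ _
  exact sprod_apply_iff _ _ _ _

lemma spow_zero_apply_iff {n : ℕ} (R : Matrix (Fin n) (Fin n) Bool) (k j : Fin n) :
    spow R 0 k j = true ↔ k = j := by
  show decide (k = j) = true ↔ _
  simp

lemma spow_pad {n : ℕ} {R : Matrix (Fin n) (Fin n) Bool} (hdiag : ∀ i, R i i = true)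
    (t : ℕ) (k j : Fin n) (h : spow R t k j = true) : spow R (t + 1) k j = true :=
  (spow_succ_apply_iff R t k j).mpr ⟨j, h, hdiag j⟩

/-- A chain of finsets in `Fin n` that is increasing, nonempty at the start,
and such that one-step stabilization propagates, is dominated by its `(n-1)`-st term. -/
lemma chain_subset_aux {n : ℕ} (s : ℕ → Finset (Fin n)) (h0 : (s 0).Nonempty)
    (hmono : ∀ t, s t ⊆ s (t + 1))
    (hstep : ∀ t, s t = s (t + 1) → s (t + 1) = s (t + 2)) :
    ∀ t, s t ⊆ s (n - 1) := by
  have mono : ∀ a b, a ≤ b → s a ⊆ s b := by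
    intro a b hab
    induction b, hab using Nat.le_induction with
    | base => exact subset_rfl
    | succ b hb ih => exact ih.trans (hmono b)
  have hfix : ∃ t0, t0 ≤ n - 1 ∧ s t0 = s (t0 + 1) := by
    by_contra h
    push_neg at h
    have hcard : ∀ t, t ≤ n → t + 1 ≤ (s t).card := by
      intro t
      induction t with
      | zero => intro _; exact h0.card_pos
      | succ t ih =>
        intro ht
        have h3 : (s t).card < (s (t + 1)).card :=
          Finset.card_lt_card ((hmono t).ssubset_of_ne (h t (by omega)))
        have h4 := ih (by omega)
        omega
    have h5 := hcard n le_rfl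
    have hle : (s n).card ≤ n := by
      simpa using Finset.card_le_univ (s n)
    omega
  obtain ⟨t0, ht0, hfx⟩ := hfix
  have const : ∀ u, s (t0 + u) = s (t0 + u + 1) := by
    intro u
    induction u with
    | zero => exact hfx
    | succ u ih => exact hstep _ ih
  have const' : ∀ u, s (t0 + u) = s t0 := by
    intro u
    induction u with
    | zero => rfl
    | succ u ih => rw [show t0 + (u + 1) = t0 + u + 1 from rfl, ← const u]; exact ih
  intro t
  rcases le_or_gt t (n - 1) with h | h
  · exact mono _ _ h
  · have e1 : s (n - 1) = s t0 := by
      obtain ⟨u, hu⟩ : ∃ u, n - 1 = t0 + u := ⟨n - 1 - t0, by omega⟩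
      rw [hu, const']
    have e2 : s t = s t0 := by
      obtain ⟨u, hu⟩ : ∃ u, t = t0 + u := ⟨t - t0, by omega⟩
      rw [hu, const']
    rw [e1, e2]

/-- Walk shortening: any structural power is dominated by the `(n-1)`-st one. -/
lemma spow_shorten {n : ℕ} {R : Matrix (Fin n) (Fin n) Bool} (hdiag : ∀ i, R i i = true)
    (t : ℕ) (k j : Fin n) (h : spow R t k j = true) : spow R (n - 1) k j = true := by
  classical
  set s : ℕ → Finset (Fin n) := fun t => Finset.univ.filter (fun j => spow R t k j = true) with hs
  have hmem : ∀ t j, j ∈ s t ↔ spow R t k j = true := by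
    intro t j; simp [hs]
  have h0 : (s 0).Nonempty :=
    ⟨k, (hmem 0 k).mpr ((spow_zero_apply_iff R k k).mpr rfl)⟩
  have hmono : ∀ t, s t ⊆ s (t + 1) := by
    intro u x hx
    exact (hmem _ x).mpr (spow_pad hdiag u k x ((hmem u x).mp hx))
  have hstep : ∀ u, s u = s (u + 1) → s (u + 1) = s (u + 2) := by
    intro u hu
    ext x
    rw [hmem, hmem, spow_succ_apply_iff, show u + 2 = (u + 1) + 1 from rfl,
      spow_succ_apply_iff]
    constructor
    · rintro ⟨l, hl, hr⟩
      refine ⟨l, ?_, hr⟩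
      have := (hmem u l).mpr hl
      rw [hu] at this
      exact (hmem (u + 1) l).mp this
    · rintro ⟨l, hl, hr⟩
      refine ⟨l, ?_, hr⟩
      have := (hmem (u + 1) l).mpr hl
      rw [← hu] at this
      exact (hmem u l).mp this
  exact (hmem _ j).mp (chain_subset_aux s h0 hmono hstep t ((hmem t j).mpr h))

lemma sum_pos_iff_exists_pos' {ι : Type*} [Fintype ι] (f : ι → ℝ) (h : ∀ i, 0 ≤ f i) :
    (0 < ∑ i, f i) ↔ ∃ i, 0 < f i := by
  constructor
  · intro hpos
    by_contra hc
    push_neg at hc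
    have hz : ∑ i, f i = 0 :=
      Finset.sum_eq_zero fun i _ => le_antisymm (hc i) (h i)
    rw [hz] at hpos
    exact lt_irrefl _ hpos
  · rintro ⟨i, hi⟩
    exact Finset.sum_pos' (fun j _ => h j) ⟨i, Finset.mem_univ i, hi⟩

section main

attribute [local instance] Matrix.frobeniusNormedRing Matrix.frobeniusNormedSpace

example (n : ℕ) : CompleteSpace (Matrix (Fin n) (Fin n) ℝ) := by infer_instance

example (n : ℕ) (B : Matrix (Fin n) (Fin n) ℝ) (h : ‖B‖ < 1) :
    Summable (fun p => B ^ p) := summable_geometric_of_norm_lt_one h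

noncomputable def entryCLM (n : ℕ) (k j : Fin n) :
    Matrix (Fin n) (Fin n) ℝ →L[ℝ] ℝ where
  toLinearMap :=
    { toFun := fun M => M k j
      map_add' := fun _ _ => rfl
      map_smul' := fun _ _ => rfl }
  cont := LinearMap.continuous_of_finiteDimensional
    ({ toFun := fun M => M k j
       map_add' := fun _ _ => rfl
       map_smul' := fun _ _ => rfl } : Matrix (Fin n) (Fin n) ℝ →ₗ[ℝ] ℝ)

lemma mul_pos_iff_nonneg' {a b : ℝ} (ha : 0 ≤ a) (hb : 0 ≤ b) :
    0 < a * b ↔ 0 < a ∧ 0 < b := by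
  rw [mul_pos_iff]
  constructor
  · rintro (⟨h1, h2⟩ | ⟨h1, h2⟩)
    · exact ⟨h1, h2⟩
    · linarith
  · exact Or.inl

/-- for binary `T` and binary `R ≥ Iₙ`, there exist an
invertible `X ∈ Sparse(R)` and `Y ∈ Sparse(T)` with
`Struct(Y X⁻¹) = T R^{n-1}`; in particular, if `T R^{n-1} ≰ S` then some
`Y ∈ Sparse(T)` and invertible `X ∈ Sparse(R)` give `Y X⁻¹ ∉ Sparse(S)`. -/
theorem exists_factors_achieving_struct_TRpow {m n : ℕ}
    (T : Matrix (Fin m) (Fin n) Bool) (R : Matrix (Fin n) (Fin n) Bool)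
    (hdiag : ∀ i, R i i = true) :
    (∃ (X : Matrix (Fin n) (Fin n) ℝ) (Y : Matrix (Fin m) (Fin n) ℝ),
        IsUnit X ∧ InSparse R X ∧ InSparse T Y ∧
        Struct (Y * X⁻¹) = sprod T (spow R (n - 1))) ∧
    (∀ S : Matrix (Fin m) (Fin n) Bool, ¬ leB (sprod T (spow R (n - 1))) S →
      ∃ (Y : Matrix (Fin m) (Fin n) ℝ) (X : Matrix (Fin n) (Fin n) ℝ),
        InSparse T Y ∧ IsUnit X ∧ InSparse R X ∧ ¬ InSparse S (Y * X⁻¹)) := by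
  classical
  set B : Matrix (Fin n) (Fin n) ℝ :=
    Matrix.of (fun i j => if R i j = true then 1 else 0) with hB
  have hBapp : ∀ i j, B i j = if R i j = true then 1 else 0 := fun i j => rfl
  have hBnn : ∀ i j, 0 ≤ B i j := by
    intro i j; rw [hBapp]; split <;> norm_num
  set ε : ℝ := (‖B‖ + 1)⁻¹ with hεdef
  have hBnorm : (0 : ℝ) ≤ ‖B‖ := norm_nonneg B
  have hεpos : 0 < ε := inv_pos.mpr (by linarith)
  have hnorm : ‖ε • B‖ < 1 := by
    rw [norm_smul, Real.norm_eq_abs, abs_of_pos hεpos, hεdef, inv_mul_eq_div,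
      div_lt_one (by linarith)]
    linarith
  set C : Matrix (Fin n) (Fin n) ℝ := ε • B with hC
  have hCapp : ∀ i j, C i j = ε * B i j := fun i j => rfl
  have hCnn : ∀ i j, 0 ≤ C i j := fun i j => by
    rw [hCapp]; exact mul_nonneg hεpos.le (hBnn i j)
  have hCpos : ∀ i j, 0 < C i j ↔ R i j = true := by
    intro i j
    rw [hCapp, hBapp]
    by_cases h : R i j = true
    · simp [h, hεpos]
    · simp [h]
  have hCpow_nn : ∀ p k j, 0 ≤ (C ^ p) k j := by
    intro p
    induction p with
    | zero =>
      intro k j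
      rw [pow_zero, Matrix.one_apply]
      split <;> norm_num
    | succ p ih =>
      intro k j
      rw [pow_succ, Matrix.mul_apply]
      exact Finset.sum_nonneg fun l _ => mul_nonneg (ih k l) (hCnn l j)
  have hCpow_pos : ∀ p k j, 0 < (C ^ p) k j ↔ spow R p k j = true := by
    intro p
    induction p with
    | zero =>
      intro k j
      rw [pow_zero, Matrix.one_apply, spow_zero_apply_iff]
      split
      · simp_all
      · simp_all
    | succ p ih =>
      intro k j
      rw [pow_succ, Matrix.mul_apply, spow_succ_apply_iff,
        sum_pos_iff_exists_pos' _ (fun l => mul_nonneg (hCpow_nn p k l) (hCnn l j))]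
      constructor
      · rintro ⟨l, hl⟩
        rw [mul_pos_iff_nonneg' (hCpow_nn p k l) (hCnn l j)] at hl
        exact ⟨l, (ih k l).mp hl.1, (hCpos l j).mp hl.2⟩
      · rintro ⟨l, h1, h2⟩
        exact ⟨l, (mul_pos_iff_nonneg' (hCpow_nn p k l) (hCnn l j)).mpr
          ⟨(ih k l).mpr h1, (hCpos l j).mpr h2⟩⟩
  set X : Matrix (Fin n) (Fin n) ℝ := 1 - C with hX
  have hXunit : IsUnit X := isUnit_one_sub_of_norm_lt_one hnorm
  have hsummable : Summable (fun p => C ^ p) := summable_geometric_of_norm_lt_one hnorm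
  have hXmul : X * (∑' p, C ^ p) = 1 := mul_neg_geom_series C hnorm
  have hXinv : X⁻¹ = ∑' p, C ^ p := Matrix.inv_eq_right_inv hXmul
  have hinv_entry : ∀ k j, X⁻¹ k j = ∑' p, (C ^ p) k j := by
    intro k j
    rw [hXinv]
    exact (entryCLM n k j).map_tsum hsummable
  have hsum2 : ∀ k j, Summable (fun p => (C ^ p) k j) := fun k j =>
    (entryCLM n k j).summable hsummable
  have hinv_nn : ∀ k j, 0 ≤ X⁻¹ k j := fun k j => by
    rw [hinv_entry]
    exact tsum_nonneg fun p => hCpow_nn p k j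
  have hinv_pos : ∀ k j, 0 < X⁻¹ k j ↔ spow R (n - 1) k j = true := by
    intro k j
    rw [hinv_entry]
    constructor
    · intro hp
      by_contra hc
      have hzero : ∀ p, (C ^ p) k j = 0 := by
        intro p
        have hnp : ¬ (0 < (C ^ p) k j) := fun hpp =>
          hc (spow_shorten hdiag p k j ((hCpow_pos p k j).mp hpp))
        exact le_antisymm (not_lt.mp hnp) (hCpow_nn p k j)
      rw [tsum_congr hzero, tsum_zero] at hp
      exact lt_irrefl _ hp
    · intro hp
      have h1 : 0 < (C ^ (n - 1)) k j := (hCpow_pos _ k j).mpr hp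
      exact lt_of_lt_of_le h1 (Summable.le_tsum (hsum2 k j) (n - 1) fun p _ => hCpow_nn p k j)
  set Y : Matrix (Fin m) (Fin n) ℝ :=
    Matrix.of (fun i j => if T i j = true then 1 else 0) with hY
  have hYapp : ∀ i j, Y i j = if T i j = true then 1 else 0 := fun _ _ => rfl
  have hYnn : ∀ i j, 0 ≤ Y i j := by
    intro i j; rw [hYapp]; split <;> norm_num
  have hYpos : ∀ i j, 0 < Y i j ↔ T i j = true := by
    intro i j
    rw [hYapp]
    split
    · simp_all
    · simp_all
  have hXsp : InSparse R X := by
    intro i j hij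
    have hne : i ≠ j := by
      rintro rfl
      rw [hdiag i] at hij
      exact absurd hij (by simp)
    have hCz : C i j = 0 := by
      rw [hCapp, hBapp, hij]
      simp
    rw [hX, Matrix.sub_apply, Matrix.one_apply_ne hne, hCz, sub_zero]
  have hYsp : InSparse T Y := by
    intro i j hij
    rw [hYapp, hij]
    simp
  have hmulnn : ∀ i j, 0 ≤ (Y * X⁻¹) i j := by
    intro i j
    rw [Matrix.mul_apply]
    exact Finset.sum_nonneg fun k _ => mul_nonneg (hYnn i k) (hinv_nn k j)
  have key : ∀ i j, (0 < (Y * X⁻¹) i j) ↔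
      (∃ k, T i k = true ∧ spow R (n - 1) k j = true) := by
    intro i j
    rw [Matrix.mul_apply,
      sum_pos_iff_exists_pos' _ (fun k => mul_nonneg (hYnn i k) (hinv_nn k j))]
    constructor
    · rintro ⟨k, hk⟩
      rw [mul_pos_iff_nonneg' (hYnn i k) (hinv_nn k j)] at hk
      exact ⟨k, (hYpos i k).mp hk.1, (hinv_pos k j).mp hk.2⟩
    · rintro ⟨k, h1, h2⟩
      exact ⟨k, (mul_pos_iff_nonneg' (hYnn i k) (hinv_nn k j)).mpr
        ⟨(hYpos i k).mpr h1, (hinv_pos k j).mpr h2⟩⟩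
  have hStruct : Struct (Y * X⁻¹) = sprod T (spow R (n - 1)) := by
    ext i j
    show decide ((Y * X⁻¹) i j ≠ 0)
      = decide (∃ k, T i k = true ∧ spow R (n - 1) k j = true)
    rw [decide_eq_decide, ← key i j]
    constructor
    · intro hne
      exact lt_of_le_of_ne (hmulnn i j) (Ne.symm hne)
    · intro hlt
      exact ne_of_gt hlt
  refine ⟨⟨X, Y, hXunit, hXsp, hYsp, hStruct⟩, ?_⟩
  intro S hS
  refine ⟨Y, X, hYsp, hXunit, hXsp, ?_⟩
  intro hsp
  unfold leB at hS
  push_neg at hS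
  obtain ⟨i, j, h1, h2⟩ := hS
  replace h2 : S i j = false := by simpa using h2
  have h4 := hsp i j h2
  have h5 : 0 < (Y * X⁻¹) i j := (key i j).mpr ((sprod_apply_iff _ _ i j).mp h1)
  exact absurd h4 (ne_of_gt h5)

end main
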